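/- Let G be a finite simple graph and I a maximum critical independent set with X = I ∪ N(I). Then every maximum critical independent set S of G is a maximum independent set of the induced subgraph G[X], and S is a critical independent set of G[X]. -/
import Mathlib


open Set

variable {V : Type*} [Fintype V]

/-- `S` is an independent set in `G`: no two of its vertices are adjacent. -/
def IsIndep (G : SimpleGraph V) (S : Set V) : Prop :=
  ∀ u ∈ S, ∀ v ∈ S, ¬ G.Adj u v

/-- The neighborhood `N(X)` of a set of vertices. -/
def nbhd (G : SimpleGraph V) (X : Set V) : Set V := {v | ∃ u ∈ X, G.Adj u v}

/-- The difference `d(X) = |X| - |N(X)|` computed in the induced subgraph `G[W]`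
(neighborhoods are intersected with `W`). -/
noncomputable def dOn (G : SimpleGraph V) (W X : Set V) : ℤ :=
  (X.ncard : ℤ) - ((nbhd G X ∩ W).ncard : ℤ)

/-- The difference `d(X) = |X| - |N(X)|` in `G`. -/
noncomputable def dG (G : SimpleGraph V) (X : Set V) : ℤ := dOn G Set.univ X

/-- `S` is a critical independent set of the induced subgraph `G[W]`:
it is an independent subset of `W` whose difference attains
`max {d(Y) : Y ⊆ W}` (the critical difference of `G[W]`). -/
def IsCritIndepOn (G : SimpleGraph V) (W S : Set V) : Prop :=
  S ⊆ W ∧ IsIndep G S ∧ ∀ Y ⊆ W, dOn G W Y ≤ dOn G W S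

/-- `S` is a critical independent set of `G`. -/
def IsCritIndep (G : SimpleGraph V) (S : Set V) : Prop := IsCritIndepOn G Set.univ S

/-- A maximum critical independent set of `G[W]`: a critical independent set of
largest cardinality. -/
def IsMaxCritIndepOn (G : SimpleGraph V) (W S : Set V) : Prop :=
  IsCritIndepOn G W S ∧ ∀ T, IsCritIndepOn G W T → T.ncard ≤ S.ncard

/-- A maximum critical independent set of `G`. -/
def IsMaxCritIndep (G : SimpleGraph V) (S : Set V) : Prop := IsMaxCritIndepOn G Set.univ S

/-- A maximum independent set of the induced subgraph `G[W]`. -/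
def IsMaxIndepOn (G : SimpleGraph V) (W S : Set V) : Prop :=
  S ⊆ W ∧ IsIndep G S ∧ ∀ T ⊆ W, IsIndep G T → T.ncard ≤ S.ncard

/-- A maximum independent set of `G`. -/
def IsMaxIndep (G : SimpleGraph V) (S : Set V) : Prop := IsMaxIndepOn G Set.univ S

/-- The independence number of the induced subgraph `G[W]`. -/
noncomputable def alphaOn (G : SimpleGraph V) (W : Set V) : ℕ :=
  sSup {n | ∃ S ⊆ W, IsIndep G S ∧ S.ncard = n}

/-- The independence number `α(G)`. -/
noncomputable def alpha (G : SimpleGraph V) : ℕ := alphaOn G Set.univ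

/-- The maximum matching number `μ(G)`. -/
noncomputable def mu (G : SimpleGraph V) : ℕ :=
  sSup {n | ∃ M : G.Subgraph, M.IsMatching ∧ M.edgeSet.ncard = n}

/-- `G` is a König-Egerváry graph: `α(G) + μ(G) = |V(G)|`. -/
def IsKE (G : SimpleGraph V) : Prop := alpha G + mu G = Fintype.card V

/-- `nucleus(G[W])`: intersection of all maximum critical independent sets of `G[W]`. -/
def nucleusOn (G : SimpleGraph V) (W : Set V) : Set V := ⋂₀ {S | IsMaxCritIndepOn G W S}

/-- `nucleus(G)`. -/
def nucleus (G : SimpleGraph V) : Set V := nucleusOn G Set.univ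

/-- `diadem(G[W])`: union of all maximum critical independent sets of `G[W]`. -/
def diademOn (G : SimpleGraph V) (W : Set V) : Set V := ⋃₀ {S | IsMaxCritIndepOn G W S}

/-- `diadem(G)`. -/
def diadem (G : SimpleGraph V) : Set V := diademOn G Set.univ

/-- `ker(G)`: intersection of all critical independent sets of `G`. -/
def kerG (G : SimpleGraph V) : Set V := ⋂₀ {S | IsCritIndep G S}

/-- `core(G)`: intersection of all maximum independent sets of `G`. -/
def core (G : SimpleGraph V) : Set V := ⋂₀ {S | IsMaxIndep G S}

/-- `corona(G)`: union of all maximum independent sets of `G`. -/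
def corona (G : SimpleGraph V) : Set V := ⋃₀ {S | IsMaxIndep G S}


section Helpers

variable {V : Type*} [Fintype V]

private lemma nbhd_mono' {G : SimpleGraph V} {A B : Set V} (h : A ⊆ B) :
    nbhd G A ⊆ nbhd G B := fun v hv => by
  obtain ⟨u, hu, ha⟩ := hv; exact ⟨u, h hu, ha⟩

private lemma nbhd_union' (G : SimpleGraph V) (A B : Set V) :
    nbhd G (A ∪ B) = nbhd G A ∪ nbhd G B := by
  ext v
  constructor
  · rintro ⟨u, hu | hu, ha⟩
    exacts [Or.inl ⟨u, hu, ha⟩, Or.inr ⟨u, hu, ha⟩]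
  · rintro (⟨u, hu, ha⟩ | ⟨u, hu, ha⟩)
    exacts [⟨u, Or.inl hu, ha⟩, ⟨u, Or.inr hu, ha⟩]

private lemma dG_def (G : SimpleGraph V) (Y : Set V) :
    dG G Y = (Y.ncard : ℤ) - ((nbhd G Y).ncard : ℤ) := by
  simp [dG, dOn]

private lemma indep_disj {G : SimpleGraph V} {A : Set V} (h : IsIndep G A) :
    ∀ v ∈ A, v ∉ nbhd G A := by
  rintro v hv ⟨u, hu, ha⟩
  exact h u hu v hv ha

/-- Hall's theorem consequence: a critical set admits a matching of `N(I)` into `I`. -/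
private lemma exists_matching (G : SimpleGraph V) {I : Set V}
    (hcrit : ∀ Y : Set V, dG G Y ≤ dG G I) :
    ∃ F : V → V, Set.InjOn F (nbhd G I) ∧ ∀ v ∈ nbhd G I, F v ∈ I ∧ G.Adj v (F v) := by
  classical
  set NI := nbhd G I with hNI
  set t : ↥NI → Finset V := fun u => (Set.toFinite (I ∩ {v | G.Adj ↑u v})).toFinset with ht
  have hall : ∀ s : Finset ↥NI, s.card ≤ (s.biUnion t).card := by
    intro s
    set T : Set V := ↑(s.image Subtype.val) with hT
    have hTsub : T ⊆ NI := by
      intro v hv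
      simp only [hT, Finset.coe_image, Set.mem_image, Finset.mem_coe] at hv
      obtain ⟨u, -, rfl⟩ := hv
      exact u.2
    have hbi : ((s.biUnion t : Finset V) : Set V) = I ∩ nbhd G T := by
      ext v
      simp only [Finset.coe_biUnion, Set.mem_iUnion, Finset.mem_coe, ht,
        Set.Finite.coe_toFinset, Set.mem_inter_iff, Set.mem_setOf_eq]
      constructor
      · rintro ⟨u, hu, hvI, ha⟩
        refine ⟨hvI, ⟨↑u, ?_, ha⟩⟩
        simp only [hT, Finset.coe_image, Set.mem_image, Finset.mem_coe]
        exact ⟨u, hu, rfl⟩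
      · rintro ⟨hvI, w, hw, ha⟩
        simp only [hT, Finset.coe_image, Set.mem_image, Finset.mem_coe] at hw
        obtain ⟨u, hu, rfl⟩ := hw
        exact ⟨u, hu, hvI, ha⟩
    have h1 := hcrit (I \ nbhd G T)
    rw [dG_def, dG_def] at h1
    have h2 : ((I \ nbhd G T).ncard : ℤ) = (I.ncard : ℤ) - ((I ∩ nbhd G T).ncard : ℤ) := by
      rw [← Set.diff_self_inter]
      exact Set.cast_ncard_sdiff Set.inter_subset_left (Set.toFinite I)
    have h3 : nbhd G (I \ nbhd G T) ⊆ NI \ T := by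
      rintro v ⟨u, hu, ha⟩
      refine ⟨⟨u, hu.1, ha⟩, fun hvT => hu.2 ⟨v, hvT, ha.symm⟩⟩
    have h4 : ((nbhd G (I \ nbhd G T)).ncard : ℤ) ≤ (NI.ncard : ℤ) - (T.ncard : ℤ) := by
      have := Set.ncard_le_ncard h3 (Set.toFinite _)
      have h5 : ((NI \ T).ncard : ℤ) = (NI.ncard : ℤ) - (T.ncard : ℤ) :=
        Set.cast_ncard_sdiff hTsub (Set.toFinite NI)
      rw [← h5]; exact_mod_cast this
    have key : (T.ncard : ℤ) ≤ ((I ∩ nbhd G T).ncard : ℤ) := by linarith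
    have hsc : s.card = T.ncard := by
      rw [hT, Set.ncard_coe_finset, Finset.card_image_of_injective s Subtype.val_injective]
    have hbc : (s.biUnion t).card = (I ∩ nbhd G T).ncard := by
      rw [← Set.ncard_coe_finset, hbi]
    rw [hsc, hbc]
    exact_mod_cast key
  obtain ⟨f, finj, hf⟩ := (Finset.all_card_le_biUnion_card_iff_exists_injective t).mp hall
  refine ⟨fun v => if h : v ∈ NI then f ⟨v, h⟩ else v, ?_, ?_⟩
  · intro a ha b hb hab
    simp only [dif_pos ha, dif_pos hb] at hab
    exact congrArg Subtype.val (finj hab)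
  · intro v hv
    simp only [dif_pos hv]
    have := hf ⟨v, hv⟩
    rw [ht, Set.Finite.mem_toFinset] at this
    exact ⟨this.1, this.2⟩

end Helpers

/-- Every maximum critical independent set `S` of `G` is a maximum independent set of
`G[X]` and a critical independent set of `G[X]`, where `X = I ∪ N(I)` for a maximum
critical independent set `I`. -/
theorem stmt19 (G : SimpleGraph V) (I X S : Set V) (hI : IsMaxCritIndep G I)
    (hX : X = I ∪ nbhd G I) (hS : IsMaxCritIndep G S) :
    IsMaxIndepOn G X S ∧ IsCritIndepOn G X S := by
  classical
  subst hX
  obtain ⟨hIci, hImax⟩ := hI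
  obtain ⟨hSci, hSmax⟩ := hS
  obtain ⟨-, hIind, hIc⟩ := id hIci
  obtain ⟨-, hSind, hSc⟩ := id hSci
  have cI : ∀ Y : Set V, dG G Y ≤ dG G I := fun Y => hIc Y (Set.subset_univ Y)
  have cS : ∀ Y : Set V, dG G Y ≤ dG G S := fun Y => hSc Y (Set.subset_univ Y)
  have hds : dG G S = dG G I := le_antisymm (cI S) (cS I)
  have hcard : S.ncard = I.ncard := le_antisymm (hImax S hSci) (hSmax I hIci)
  obtain ⟨F, Finj, hF⟩ := exists_matching G cI
  have hdisjI : ∀ v ∈ I, v ∉ nbhd G I := indep_disj hIind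
  -- Step 1 : S ⊆ X
  have hSsubX : S ⊆ I ∪ nbhd G I := by
    rw [← Set.diff_eq_empty]
    set D := S \ (I ∪ nbhd G I) with hD
    -- supermodularity equalities
    have hU := cI (S ∪ I)
    have hIn := cI (S ∩ I)
    rw [dG_def, dG_def, nbhd_union'] at hU
    rw [dG_def, dG_def] at hIn
    rw [dG_def, dG_def] at hds
    have hNi : nbhd G (S ∩ I) ⊆ nbhd G S ∩ nbhd G I :=
      Set.subset_inter (nbhd_mono' Set.inter_subset_left) (nbhd_mono' Set.inter_subset_right)
    have hmono : ((nbhd G (S ∩ I)).ncard : ℤ) ≤ ((nbhd G S ∩ nbhd G I).ncard : ℤ) := by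
      exact_mod_cast Set.ncard_le_ncard hNi (Set.toFinite _)
    have e1 : (((S ∪ I).ncard : ℤ) + ((S ∩ I).ncard : ℤ)) = (S.ncard : ℤ) + (I.ncard : ℤ) := by
      exact_mod_cast Set.ncard_union_add_ncard_inter S I
    have e2 : (((nbhd G S ∪ nbhd G I).ncard : ℤ) + ((nbhd G S ∩ nbhd G I).ncard : ℤ))
        = ((nbhd G S).ncard : ℤ) + ((nbhd G I).ncard : ℤ) := by
      exact_mod_cast Set.ncard_union_add_ncard_inter (nbhd G S) (nbhd G I)
    -- |N(S) \ N(I)| = |S \ I|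
    have hdiff1 : ((nbhd G S \ nbhd G I).ncard : ℤ)
        = ((nbhd G S).ncard : ℤ) - ((nbhd G S ∩ nbhd G I).ncard : ℤ) := by
      rw [← Set.diff_self_inter]
      exact Set.cast_ncard_sdiff Set.inter_subset_left (Set.toFinite _)
    have hdiff2 : ((S \ I).ncard : ℤ) = (S.ncard : ℤ) - ((S ∩ I).ncard : ℤ) := by
      rw [← Set.diff_self_inter]
      exact Set.cast_ncard_sdiff Set.inter_subset_left (Set.toFinite _)
    have hNSNI : ((nbhd G S \ nbhd G I).ncard : ℤ) = ((S \ I).ncard : ℤ) := by linarith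
    -- partition S \ I = D ∪ Q'
    set Q' := S ∩ nbhd G I with hQ'
    have hpart : S \ I = D ∪ Q' := by
      ext v
      simp only [hD, hQ', Set.mem_diff, Set.mem_union, Set.mem_inter_iff]
      constructor
      · rintro ⟨hvS, hvI⟩
        by_cases h : v ∈ nbhd G I
        · exact Or.inr ⟨hvS, h⟩
        · exact Or.inl ⟨hvS, fun h' => h'.elim hvI h⟩
      · rintro (⟨hvS, hv⟩ | ⟨hvS, hv⟩)
        · exact ⟨hvS, fun h => hv (Or.inl h)⟩
        · exact ⟨hvS, fun h => hdisjI v h hv⟩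
    have hDQdisj : Disjoint D Q' := by
      rw [Set.disjoint_left]
      rintro v hvD hvQ
      exact hvD.2 (Or.inr hvQ.2)
    have hSIcard : ((S \ I).ncard : ℤ) = (D.ncard : ℤ) + (Q'.ncard : ℤ) := by
      rw [hpart]
      exact_mod_cast Set.ncard_union_eq hDQdisj
    -- injections
    set A1 := nbhd G D \ nbhd G I with hA1
    set A2 := F '' Q' with hA2
    have hA2sub : A2 ⊆ (nbhd G S \ nbhd G I) \ nbhd G D := by
      rintro _ ⟨u, hu, rfl⟩
      obtain ⟨hFI, hFadj⟩ := hF u hu.2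
      refine ⟨⟨⟨u, hu.1, hFadj⟩, fun h => hdisjI (F u) hFI h⟩, ?_⟩
      rintro ⟨d, hd, hadj⟩
      exact hd.2 (Or.inr ⟨F u, hFI, hadj.symm⟩)
    have hA1sub : A1 ⊆ nbhd G S \ nbhd G I := fun v hv =>
      ⟨nbhd_mono' (Set.diff_subset (t := I ∪ nbhd G I)) hv.1, hv.2⟩
    have hA12disj : Disjoint A1 A2 := by
      rw [Set.disjoint_left]
      intro v hv1 hv2
      exact (hA2sub hv2).2 hv1.1
    have hA2card : A2.ncard = Q'.ncard :=
      Set.ncard_image_of_injOn (Finj.mono Set.inter_subset_right)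
    have hA1card : (A1.ncard : ℤ) ≤ (D.ncard : ℤ) := by
      have hsub : A1 ∪ A2 ⊆ nbhd G S \ nbhd G I :=
        Set.union_subset hA1sub (hA2sub.trans Set.diff_subset)
      have h1 : (A1 ∪ A2).ncard = A1.ncard + A2.ncard := Set.ncard_union_eq hA12disj
      have h2 : (A1 ∪ A2).ncard ≤ (nbhd G S \ nbhd G I).ncard :=
        Set.ncard_le_ncard hsub (Set.toFinite _)
      have h2' : ((A1.ncard : ℤ) + (A2.ncard : ℤ)) ≤ ((nbhd G S \ nbhd G I).ncard : ℤ) := by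
        rw [h1] at h2; exact_mod_cast h2
      rw [hA2card] at h2'
      linarith
    -- T = I ∪ D is critical independent
    have hTind : IsIndep G (I ∪ D) := by
      rintro u (hu | hu) v (hv | hv) hadj
      · exact hIind u hu v hv hadj
      · exact hv.2 (Or.inr ⟨u, hu, hadj⟩)
      · exact hu.2 (Or.inr ⟨v, hv, hadj.symm⟩)
      · exact hSind u hu.1 v hv.1 hadj
    have hIDdisj : Disjoint I D := by
      rw [Set.disjoint_right]
      intro v hv hvI
      exact hv.2 (Or.inl hvI)
    have hTcard : ((I ∪ D).ncard : ℤ) = (I.ncard : ℤ) + (D.ncard : ℤ) := by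
      exact_mod_cast Set.ncard_union_eq hIDdisj
    have hNT : nbhd G (I ∪ D) ⊆ nbhd G I ∪ A1 := by
      rw [nbhd_union']
      rintro v (hv | hv)
      · exact Or.inl hv
      · by_cases h : v ∈ nbhd G I
        · exact Or.inl h
        · exact Or.inr ⟨hv, h⟩
    have hNTcard : ((nbhd G (I ∪ D)).ncard : ℤ) ≤ ((nbhd G I).ncard : ℤ) + (A1.ncard : ℤ) := by
      have h1 : (nbhd G (I ∪ D)).ncard ≤ (nbhd G I ∪ A1).ncard :=
        Set.ncard_le_ncard hNT (Set.toFinite _)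
      have h2 : (nbhd G I ∪ A1).ncard ≤ (nbhd G I).ncard + A1.ncard :=
        Set.ncard_union_le _ _
      exact_mod_cast h1.trans h2
    have hdT : dG G I ≤ dG G (I ∪ D) := by
      rw [dG_def, dG_def, hTcard]
      linarith
    have hTcrit : IsCritIndepOn G Set.univ (I ∪ D) :=
      ⟨Set.subset_univ _, hTind, fun Y _ => le_trans (cI Y) hdT⟩
    have hle := hImax (I ∪ D) hTcrit
    have hD0 : D.ncard = 0 := by
      have : ((I ∪ D).ncard : ℤ) ≤ (I.ncard : ℤ) := by exact_mod_cast hle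
      rw [hTcard] at this
      omega
    exact (Set.ncard_eq_zero (Set.toFinite D)).mp hD0
  -- Step 2 : the critical-difference bound on X
  have hbound : ∀ Y ⊆ I ∪ nbhd G I, dOn G (I ∪ nbhd G I) Y ≤ dG G I := by
    intro Y hY
    set P := Y ∩ I with hP
    set Q := Y ∩ nbhd G I with hQ
    have hYPQ : Y = P ∪ Q := by
      ext v
      simp only [hP, hQ, Set.mem_union, Set.mem_inter_iff]
      constructor
      · intro hv
        rcases hY hv with h | h
        · exact Or.inl ⟨hv, h⟩
        · exact Or.inr ⟨hv, h⟩
      · rintro (⟨hv, -⟩ | ⟨hv, -⟩) <;> exact hv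
    have hPQdisj : Disjoint P Q := by
      rw [Set.disjoint_left]
      rintro v hvP hvQ
      exact hdisjI v hvP.2 hvQ.2
    have hYcard : (Y.ncard : ℤ) = (P.ncard : ℤ) + (Q.ncard : ℤ) := by
      rw [hYPQ]
      exact_mod_cast Set.ncard_union_eq hPQdisj
    set A3 := F '' Q with hA3
    have hA3sub : A3 ⊆ (nbhd G Y ∩ (I ∪ nbhd G I)) ∩ I := by
      rintro _ ⟨u, hu, rfl⟩
      obtain ⟨hFI, hFadj⟩ := hF u hu.2
      exact ⟨⟨⟨u, hu.1, hFadj⟩, Or.inl hFI⟩, hFI⟩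
    have hA4sub : nbhd G P ⊆ (nbhd G Y ∩ (I ∪ nbhd G I)) \ I := by
      rintro v ⟨u, hu, hadj⟩
      refine ⟨⟨⟨u, hu.1, hadj⟩, Or.inr ⟨u, hu.2, hadj⟩⟩, fun hvI => hdisjI v hvI ⟨u, hu.2, hadj⟩⟩
    have hA34disj : Disjoint (nbhd G P) A3 := by
      rw [Set.disjoint_left]
      intro v hv1 hv2
      exact (hA4sub hv1).2 (hA3sub hv2).2
    have hA3card : A3.ncard = Q.ncard :=
      Set.ncard_image_of_injOn (Finj.mono Set.inter_subset_right)
    have hsum : ((nbhd G P).ncard : ℤ) + (Q.ncard : ℤ)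
        ≤ ((nbhd G Y ∩ (I ∪ nbhd G I)).ncard : ℤ) := by
      have hsub : nbhd G P ∪ A3 ⊆ nbhd G Y ∩ (I ∪ nbhd G I) :=
        Set.union_subset (hA4sub.trans Set.diff_subset)
          (hA3sub.trans Set.inter_subset_left)
      have h1 : (nbhd G P ∪ A3).ncard = (nbhd G P).ncard + A3.ncard :=
        Set.ncard_union_eq hA34disj
      have h2 : (nbhd G P ∪ A3).ncard ≤ (nbhd G Y ∩ (I ∪ nbhd G I)).ncard :=
        Set.ncard_le_ncard hsub (Set.toFinite _)
      rw [h1, hA3card] at h2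
      exact_mod_cast h2
    have hdP := cI P
    rw [dG_def] at hdP
    have hPY : (P.ncard : ℤ) - ((nbhd G P).ncard : ℤ) ≤ dG G I := hdP
    show (Y.ncard : ℤ) - ((nbhd G Y ∩ (I ∪ nbhd G I)).ncard : ℤ) ≤ dG G I
    linarith
  -- Step 3 : dOn at S is at least dG G I
  have hSX : dG G I ≤ dOn G (I ∪ nbhd G I) S := by
    rw [← hds, dG_def]
    show _ ≤ (S.ncard : ℤ) - ((nbhd G S ∩ (I ∪ nbhd G I)).ncard : ℤ)
    have : (nbhd G S ∩ (I ∪ nbhd G I)).ncard ≤ (nbhd G S).ncard :=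
      Set.ncard_le_ncard Set.inter_subset_left (Set.toFinite _)
    have h' : ((nbhd G S ∩ (I ∪ nbhd G I)).ncard : ℤ) ≤ ((nbhd G S).ncard : ℤ) := by
      exact_mod_cast this
    linarith
  -- Step 4 : maximality among independent subsets of X
  have hmax : ∀ T ⊆ I ∪ nbhd G I, IsIndep G T → T.ncard ≤ S.ncard := by
    intro T hT hTind
    rw [hcard]
    have hTPQ : T = (T ∩ I) ∪ (T ∩ nbhd G I) := by
      ext v
      simp only [Set.mem_union, Set.mem_inter_iff]
      constructor
      · intro hv
        rcases hT hv with h | h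
        · exact Or.inl ⟨hv, h⟩
        · exact Or.inr ⟨hv, h⟩
      · rintro (⟨hv, -⟩ | ⟨hv, -⟩) <;> exact hv
    have hdisj : Disjoint (T ∩ I) (T ∩ nbhd G I) := by
      rw [Set.disjoint_left]
      rintro v hv1 hv2
      exact hdisjI v hv1.2 hv2.2
    have himg : F '' (T ∩ nbhd G I) ⊆ I \ (T ∩ I) := by
      rintro _ ⟨u, hu, rfl⟩
      obtain ⟨hFI, hFadj⟩ := hF u hu.2
      exact ⟨hFI, fun h => hTind u hu.1 (F u) h.1 hFadj⟩
    have h1 : (T ∩ nbhd G I).ncard ≤ (I \ (T ∩ I)).ncard := by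
      rw [← Set.ncard_image_of_injOn (Finj.mono Set.inter_subset_right)]
      exact Set.ncard_le_ncard himg (Set.toFinite _)
    have h2 : (I \ (T ∩ I)).ncard + (T ∩ I).ncard = I.ncard :=
      Set.ncard_diff_add_ncard_of_subset Set.inter_subset_right (Set.toFinite I)
    calc T.ncard = (T ∩ I).ncard + (T ∩ nbhd G I).ncard := by
          conv_lhs => rw [hTPQ]
          exact Set.ncard_union_eq hdisj
      _ ≤ (T ∩ I).ncard + (I \ (T ∩ I)).ncard := by omega
      _ = I.ncard := by omega
  exact ⟨⟨hSsubX, hSind, hmax⟩, hSsubX, hSind,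
    fun Y hY => le_trans (hbound Y hY) hSX⟩
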